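/- Let U be a k-periodic word (i.e., U_{i+k} = U_i whenever both sides are defined), let R be any finite word, and define h_R(x) = LCS(R, U_{<x}) for x ≥ 0 and h_R(x) = x for x ≤ 0, where U_{<x} is the x-letter prefix of U. Then the function δ_k h_R defined by δ_k h_R(x) = h_R(x) − h_R(x−k) is monotone non-increasing in x. -/

import Mathlib

/-- Length of a longest common subsequence of two words. -/
noncomputable def LCS {α : Type*} (V W : List α) : ℕ :=
  sSup {n | ∃ t : List α, t.length = n ∧ t.Sublist V ∧ t.Sublist W}


theorem List.chain'_append {α : Type*} {R : α → α → Prop} {l₁ l₂ : List α} :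
    List.Chain' R (l₁ ++ l₂) ↔
      List.Chain' R l₁ ∧ List.Chain' R l₂ ∧ ∀ x ∈ l₁.getLast?, ∀ y ∈ l₂.head?, R x y :=
  List.isChain_append

theorem List.chain'_cons {α : Type*} {R : α → α → Prop} {x y : α} {l : List α} :
    List.Chain' R (x :: y :: l) ↔ R x y ∧ List.Chain' R (y :: l) :=
  List.isChain_cons_cons

theorem List.chain'_iff_pairwise {α : Type*} {R : α → α → Prop} [IsTrans α R] {l : List α} :
    List.Chain' R l ↔ List.Pairwise R l :=
  List.isChain_iff_pairwise

theorem List.Pairwise.chain' {α : Type*} {R : α → α → Prop} {l : List α}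
    (h : List.Pairwise R l) : List.Chain' R l :=
  h.isChain

theorem List.chain'_map {α β : Type*} {R : α → α → Prop} (f : β → α) {l : List β} :
    List.Chain' R (l.map f) ↔ List.Chain' (fun a b : β => R (f a) (f b)) l :=
  List.isChain_map f

namespace LCSAux

def lt2 (a b : ℕ × ℕ) : Prop := a.1 < b.1 ∧ a.2 < b.2

instance : IsTrans (ℕ × ℕ) lt2 :=
  ⟨fun _ _ _ h1 h2 => ⟨h1.1.trans h2.1, h1.2.trans h2.2⟩⟩

variable {α : Type*}

lemma lcs_bdd (V W : List α) :
    BddAbove {n | ∃ t : List α, t.length = n ∧ t.Sublist V ∧ t.Sublist W} :=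
  ⟨V.length, fun _ ⟨t, ht, h1, _⟩ => ht ▸ h1.length_le⟩

lemma lcs_nonempty (V W : List α) :
    {n | ∃ t : List α, t.length = n ∧ t.Sublist V ∧ t.Sublist W}.Nonempty :=
  ⟨0, [], rfl, List.nil_sublist _, List.nil_sublist _⟩

lemma le_lcs {V W t : List α} (h1 : t.Sublist V) (h2 : t.Sublist W) :
    t.length ≤ LCS V W :=
  le_csSup (lcs_bdd V W) ⟨t, rfl, h1, h2⟩

lemma lcs_spec (V W : List α) :
    ∃ t : List α, t.length = LCS V W ∧ t.Sublist V ∧ t.Sublist W :=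
  Nat.sSup_mem (lcs_nonempty V W) (lcs_bdd V W)

lemma lcs_le_right (V W : List α) : LCS V W ≤ W.length := by
  obtain ⟨t, ht, _, h2⟩ := lcs_spec V W
  exact ht ▸ h2.length_le

lemma lcs_mono (V : List α) {W W' : List α} (h : W.Sublist W') : LCS V W ≤ LCS V W' := by
  obtain ⟨t, ht, h1, h2⟩ := lcs_spec V W
  exact ht ▸ le_lcs h1 (h2.trans h)

lemma lcs_take_succ (V W : List α) (n : ℕ) :
    LCS V (W.take (n + 1)) ≤ LCS V (W.take n) + 1 := by
  obtain ⟨t, ht, h1, h2⟩ := lcs_spec V (W.take (n + 1))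
  rw [List.take_succ, List.sublist_append_iff] at h2
  obtain ⟨t1, t2, rfl, ha, hb⟩ := h2
  have h2len : t2.length ≤ 1 := by
    have h3 := hb.length_le
    have h4 : (W[n]?.toList).length ≤ 1 := by cases W[n]? <;> simp
    omega
  have h1' : t1.Sublist V := (List.sublist_append_left t1 t2).trans h1
  have := le_lcs h1' ha
  have := ht.symm
  simp only [List.length_append] at this
  omega

lemma lcs_take_mono (V W : List α) {a b : ℕ} (h : a ≤ b) :
    LCS V (W.take a) ≤ LCS V (W.take b) := by
  apply lcs_mono
  rw [show W.take a = (W.take b).take a by rw [List.take_take, min_eq_left h]]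
  exact List.take_sublist _ _

lemma subl_to_mat {V W t : List α} (h1 : t.Sublist V) (h2 : t.Sublist W) :
    ∃ L : List (ℕ × ℕ), L.length = t.length ∧ L.Chain' lt2 ∧
      ∀ pq ∈ L, ∃ (hp : pq.1 < V.length) (hq : pq.2 < W.length), V[pq.1] = W[pq.2] := by
  obtain ⟨f, hf⟩ := List.sublist_iff_exists_fin_orderEmbedding_get_eq.mp h1
  obtain ⟨g, hg⟩ := List.sublist_iff_exists_fin_orderEmbedding_get_eq.mp h2
  refine ⟨(List.finRange t.length).map (fun ix => ((f ix : ℕ), (g ix : ℕ))), by simp, ?_, ?_⟩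
  · apply List.Pairwise.chain'
    apply List.Pairwise.map _ _ (List.pairwise_lt_finRange t.length)
    intro a b hab
    exact ⟨by exact_mod_cast f.lt_iff_lt.mpr hab, by exact_mod_cast g.lt_iff_lt.mpr hab⟩
  · intro pq hpq
    simp only [List.mem_map, List.mem_finRange, true_and] at hpq
    obtain ⟨ix, rfl⟩ := hpq
    refine ⟨(f ix).2, (g ix).2, ?_⟩
    have e1 := hf ix
    have e2 := hg ix
    simp only [List.get_eq_getElem] at e1 e2
    rw [← e1, ← e2]

lemma mat_to_subl (V W : List α) :
    ∀ (L : List (ℕ × ℕ)) (a b : ℕ), L.Chain' lt2 →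
      (∀ pq ∈ L, ∃ (hp : pq.1 < V.length) (hq : pq.2 < W.length), V[pq.1] = W[pq.2]) →
      (∀ pq ∈ L, a ≤ pq.1 ∧ b ≤ pq.2) →
      ∃ t : List α, t.length = L.length ∧ t.Sublist (V.drop a) ∧ t.Sublist (W.drop b)
  | [], a, b, _, _, _ => ⟨[], rfl, List.nil_sublist _, List.nil_sublist _⟩
  | pq :: L, a, b, hc, hP, hab => by
    obtain ⟨hp, hq, heq⟩ := hP pq List.mem_cons_self
    have hrest : ∀ r ∈ L, pq.1 + 1 ≤ r.1 ∧ pq.2 + 1 ≤ r.2 := by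
      intro r hr
      have hpw := List.chain'_iff_pairwise.mp hc
      have := (List.pairwise_cons.mp hpw).1 r hr
      exact ⟨this.1, this.2⟩
    obtain ⟨t, ht, h1, h2⟩ := mat_to_subl V W L (pq.1 + 1) (pq.2 + 1) hc.tail
      (fun r hr => hP r (List.mem_cons_of_mem _ hr)) hrest
    refine ⟨V[pq.1] :: t, by simp [ht], ?_, ?_⟩
    · have hs : (V[pq.1] :: t).Sublist (V.drop pq.1) := by
        rw [List.drop_eq_getElem_cons hp]
        exact h1.cons₂ _
      exact hs.trans (List.drop_sublist_drop_left V (hab pq List.mem_cons_self).1)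
    · have hs : (V[pq.1] :: t).Sublist (W.drop pq.2) := by
        rw [List.drop_eq_getElem_cons hq, heq]
        exact h2.cons₂ _
      exact hs.trans (List.drop_sublist_drop_left W (hab pq List.mem_cons_self).2)

lemma mat_le_lcs_take (R U : List α) (L : List (ℕ × ℕ)) (x : ℕ) (hc : L.Chain' lt2)
    (hP : ∀ pq ∈ L, ∃ (hp : pq.1 < R.length) (hq : pq.2 < U.length), R[pq.1] = U[pq.2])
    (hcol : ∀ pq ∈ L, pq.2 < x) :
    L.length ≤ LCS R (U.take x) := by
  have hP' : ∀ pq ∈ L, ∃ (hp : pq.1 < R.length) (hq : pq.2 < (U.take x).length),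
      R[pq.1] = (U.take x)[pq.2] := by
    intro pq hpq
    obtain ⟨hp, hq, heq⟩ := hP pq hpq
    refine ⟨hp, ?_, ?_⟩
    · rw [List.length_take]; exact lt_min (hcol _ hpq) hq
    · rw [List.getElem_take]; exact heq
  obtain ⟨t, ht, h1, h2⟩ := mat_to_subl R (U.take x) L 0 0 hc hP'
    (fun pq _ => ⟨Nat.zero_le _, Nat.zero_le _⟩)
  rw [List.drop_zero] at h1 h2
  exact ht ▸ le_lcs h1 h2

lemma lcs_take_mat (R U : List α) (x : ℕ) :
    ∃ L : List (ℕ × ℕ), L.length = LCS R (U.take x) ∧ L.Chain' lt2 ∧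
      (∀ pq ∈ L, ∃ (hp : pq.1 < R.length) (hq : pq.2 < U.length), R[pq.1] = U[pq.2]) ∧
      (∀ pq ∈ L, pq.2 < x) := by
  obtain ⟨t, ht, h1, h2⟩ := lcs_spec R (U.take x)
  obtain ⟨L, hL, hc, hP⟩ := subl_to_mat h1 h2
  refine ⟨L, hL.trans ht, hc, ?_, ?_⟩
  · intro pq hpq
    obtain ⟨hp, hq, heq⟩ := hP pq hpq
    have hq' : pq.2 < U.length := lt_of_lt_of_le hq (by simp [List.length_take])
    refine ⟨hp, hq', ?_⟩
    rw [List.getElem_take] at heq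
    exact heq
  · intro pq hpq
    obtain ⟨_, hq, _⟩ := hP pq hpq
    rw [List.length_take, lt_min_iff] at hq
    exact hq.1

end LCSAux

namespace LCSAux

lemma crossing_done (P : ℕ × ℕ → Prop) (k X : ℕ) (T₁ S₁ T₂ S₂ : List (ℕ × ℕ))
    (hT : (T₁ ++ T₂).Chain' lt2)
    (hS : (S₁ ++ S₂).Chain' lt2)
    (hTm : ∀ a ∈ T₁ ++ T₂, P a ∧ a.2 ≤ X)
    (hSm : ∀ a ∈ S₁ ++ S₂, P a ∧ k ≤ a.2 ∧ a.2 < X)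
    (hST : (S₁ ++ T₂).Chain' lt2)
    (hT₂k : ∀ a ∈ T₂, k ≤ a.2)
    (hpj : ∀ a ∈ T₁.getLast?, ∀ b ∈ S₂.head?, a.1 < b.1)
    (hT₁X : ∀ a ∈ T₁, a.2 < X)
    (hok : ∀ a ∈ T₁.getLast?, ∀ b ∈ S₂.head?, a.2 < b.2) :
    ∃ A B : List (ℕ × ℕ),
      A.Chain' lt2 ∧ B.Chain' lt2 ∧
      (∀ a ∈ A, P a ∧ a.2 < X) ∧
      (∀ a ∈ B, P a ∧ k ≤ a.2 ∧ a.2 ≤ X) ∧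
      A.length + B.length = T₁.length + T₂.length + S₁.length + S₂.length := by
  refine ⟨T₁ ++ S₂, S₁ ++ T₂, ?_, hST, ?_, ?_, ?_⟩
  · rw [List.chain'_append]
    exact ⟨(List.chain'_append.mp hT).1, (List.chain'_append.mp hS).2.1,
      fun a ha b hb => ⟨hpj a ha b hb, hok a ha b hb⟩⟩
  · intro a ha
    rcases List.mem_append.mp ha with h | h
    · exact ⟨(hTm a (List.mem_append_left _ h)).1, hT₁X a h⟩
    · have := hSm a (List.mem_append_right _ h)
      exact ⟨this.1, this.2.2⟩
  · intro a ha
    rcases List.mem_append.mp ha with h | h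
    · have := hSm a (List.mem_append_left _ h)
      exact ⟨this.1, this.2.1, le_of_lt this.2.2⟩
    · have := hTm a (List.mem_append_right _ h)
      exact ⟨this.1, hT₂k a h, this.2⟩
  · simp only [List.length_append]; omega

lemma crossing (P : ℕ × ℕ → Prop) (k X : ℕ) :
    ∀ (n : ℕ) (T₁ S₁ T₂ S₂ : List (ℕ × ℕ)),
      T₁.length + S₁.length ≤ n →
      (T₁ ++ T₂).Chain' lt2 →
      (S₁ ++ S₂).Chain' lt2 →
      (∀ a ∈ T₁ ++ T₂, P a ∧ a.2 ≤ X) →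
      (∀ a ∈ S₁ ++ S₂, P a ∧ k ≤ a.2 ∧ a.2 < X) →
      (S₁ ++ T₂).Chain' lt2 →
      (∀ a ∈ T₂, k ≤ a.2) →
      (∀ a ∈ T₁.getLast?, ∀ b ∈ S₂.head?, a.1 < b.1) →
      (∀ a ∈ T₁, a.2 < X) →
      ∃ A B : List (ℕ × ℕ),
        A.Chain' lt2 ∧ B.Chain' lt2 ∧
        (∀ a ∈ A, P a ∧ a.2 < X) ∧
        (∀ a ∈ B, P a ∧ k ≤ a.2 ∧ a.2 ≤ X) ∧
        A.length + B.length = T₁.length + T₂.length + S₁.length + S₂.length := by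
  intro n
  induction n with
  | zero =>
    intro T₁ S₁ T₂ S₂ hlen hT hS hTm hSm hST hT₂k hpj hT₁X
    have hT₁ : T₁ = [] := List.length_eq_zero_iff.mp (by omega)
    exact crossing_done P k X T₁ S₁ T₂ S₂ hT hS hTm hSm hST hT₂k hpj hT₁X
      (by subst hT₁; simp)
  | succ n ih =>
    intro T₁ S₁ T₂ S₂ hlen hT hS hTm hSm hST hT₂k hpj hT₁X
    by_cases hok : ∀ a ∈ T₁.getLast?, ∀ b ∈ S₂.head?, a.2 < b.2
    · exact crossing_done P k X T₁ S₁ T₂ S₂ hT hS hTm hSm hST hT₂k hpj hT₁X hok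
    · push_neg at hok
      obtain ⟨a, ha, b, hb, hba⟩ := hok
      -- decompose T₁ and S₂
      rcases List.eq_nil_or_concat' T₁ with rfl | ⟨T₁', a', rfl⟩
      · simp at ha
      have haa : a = a' := by
        rw [List.getLast?_concat] at ha; exact (Option.some_inj.mp ha).symm
      subst haa
      rcases hS₂ : S₂ with _ | ⟨b', S₂'⟩
      · subst hS₂; simp at hb
      have hbb : b = b' := by
        subst hS₂
        simp only [List.head?_cons] at hb
        exact (Option.some_inj.mp hb).symm
      subst hbb
      subst hS₂
      -- basic facts
      have hab1 : a.1 < b.1 := hpj a ha b (by simp)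
      have hbk : k ≤ b.2 := (hSm b (by simp)).2.1
      have hak : k ≤ a.2 := le_trans hbk hba
      -- rearranged chains
      have hT' : (T₁' ++ (a :: T₂)).Chain' lt2 := by
        rwa [List.append_assoc, List.singleton_append] at hT
      have hchainT₁ : (T₁' ++ [a]).Chain' lt2 := (List.chain'_append.mp hT).1
      have haT₂ : (a :: T₂).Chain' lt2 := (List.chain'_append.mp hT').2.1
      have hjT₁' : ∀ a' ∈ T₁'.getLast?, a'.1 < a.1 := by
        intro c' hc'
        exact ((List.chain'_append.mp hchainT₁).2.2 c' hc' a (by simp)).1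
      -- membership rearranged
      have hTm' : ∀ y ∈ T₁' ++ (a :: T₂), P y ∧ y.2 ≤ X := by
        intro y hy
        apply hTm
        rw [List.append_assoc, List.singleton_append]
        exact hy
      -- case analysis on S₁
      rcases List.eq_nil_or_concat' S₁ with rfl | ⟨S₁', c, rfl⟩
      · -- S₁ empty: move a into T₂  (case M1 with no S₁-junction)
        obtain ⟨A, B, h1, h2, h3, h4, h5⟩ :=
          ih T₁' [] (a :: T₂) (b :: S₂') (by simp at hlen ⊢; omega) hT' hS hTm' hSm
            (by
              simp only [List.nil_append] at hST ⊢
              exact haT₂)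
            (by
              intro y hy
              rcases List.mem_cons.mp hy with rfl | hy'
              · exact hak
              · exact hT₂k y hy')
            (by
              intro a' ha' b' hb'
              simp only [List.head?_cons] at hb'
              obtain rfl := Option.some_inj.mp hb'
              exact lt_trans (hjT₁' a' ha') hab1)
            (fun y hy => hT₁X y (by simp [hy]))
        refine ⟨A, B, h1, h2, h3, h4, ?_⟩
        simp only [List.length_append, List.length_cons, List.length_nil] at h5 ⊢
        omega
      · -- S₁ = S₁' ++ [c]
        have hchainS₁ : (S₁' ++ [c]).Chain' lt2 := (List.chain'_append.mp hS).1
        have hjS₁' : ∀ d ∈ S₁'.getLast?, lt2 d c := by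
          intro d hd
          exact (List.chain'_append.mp hchainS₁).2.2 d hd c (by simp)
        have hcb : lt2 c b := (List.chain'_append.mp hS).2.2 c (by simp [List.getLast?_concat]) b (by simp)
        rcases lt_trichotomy c.1 a.1 with hca | hca | hca
        · -- M1: move a into T₂
          obtain ⟨A, B, h1, h2, h3, h4, h5⟩ :=
            ih T₁' (S₁' ++ [c]) (a :: T₂) (b :: S₂')
              (by simp only [List.length_append, List.length_cons, List.length_nil] at hlen ⊢; omega)
              hT' hS hTm' hSm
              (by
                rw [List.chain'_append]
                refine ⟨hchainS₁, haT₂, ?_⟩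
                intro d hd y hy
                simp only [List.head?_cons] at hy
                obtain rfl := Option.some_inj.mp hy
                rw [List.getLast?_concat] at hd
                obtain rfl := Option.some_inj.mp hd
                exact ⟨hca, lt_of_lt_of_le hcb.2 hba⟩)
              (by
                intro y hy
                rcases List.mem_cons.mp hy with rfl | hy'
                · exact hak
                · exact hT₂k y hy')
              (by
                intro a' ha' b' hb'
                simp only [List.head?_cons] at hb'
                obtain rfl := Option.some_inj.mp hb'
                exact lt_trans (hjT₁' a' ha') hab1)
              (fun y hy => hT₁X y (by simp [hy]))
          refine ⟨A, B, h1, h2, h3, h4, ?_⟩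
          simp only [List.length_append, List.length_cons, List.length_nil] at h5 ⊢
          omega
        · -- M3: tie, move both
          obtain ⟨A, B, h1, h2, h3, h4, h5⟩ :=
            ih T₁' S₁' (a :: T₂) (c :: b :: S₂')
              (by simp only [List.length_append, List.length_cons, List.length_nil] at hlen ⊢; omega)
              hT'
              (by rwa [List.append_assoc, List.singleton_append] at hS)
              hTm'
              (by
                intro y hy
                apply hSm
                rw [List.append_assoc, List.singleton_append]
                exact hy)
              (by
                rw [List.chain'_append]
                refine ⟨(List.chain'_append.mp hchainS₁).1, haT₂, ?_⟩
                intro d hd y hy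
                simp only [List.head?_cons] at hy
                obtain rfl := Option.some_inj.mp hy
                have hdc := hjS₁' d hd
                exact ⟨lt_of_lt_of_eq hdc.1 hca, lt_of_lt_of_le (lt_trans hdc.2 hcb.2) hba⟩)
              (by
                intro y hy
                rcases List.mem_cons.mp hy with rfl | hy'
                · exact hak
                · exact hT₂k y hy')
              (by
                intro a' ha' b' hb'
                simp only [List.head?_cons] at hb'
                obtain rfl := Option.some_inj.mp hb'
                exact lt_of_lt_of_eq (hjT₁' a' ha') hca.symm)
              (fun y hy => hT₁X y (by simp [hy]))
          refine ⟨A, B, h1, h2, h3, h4, ?_⟩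
          simp only [List.length_append, List.length_cons, List.length_nil] at h5 ⊢
          omega
        · -- M2: move c into S₂
          obtain ⟨A, B, h1, h2, h3, h4, h5⟩ :=
            ih (T₁' ++ [a]) S₁' T₂ (c :: b :: S₂')
              (by simp only [List.length_append, List.length_cons, List.length_nil] at hlen ⊢; omega)
              hT
              (by rwa [List.append_assoc, List.singleton_append] at hS)
              hTm
              (by
                intro y hy
                apply hSm
                rw [List.append_assoc, List.singleton_append]
                exact hy)
              (by
                have hST' : (S₁' ++ (c :: T₂)).Chain' lt2 := by
                  rwa [List.append_assoc, List.singleton_append] at hST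
                refine hST'.sublist ?_
                apply List.Sublist.append_left
                exact List.sublist_cons_self c T₂)
              hT₂k
              (by
                intro a' ha' b' hb'
                simp only [List.head?_cons] at hb'
                obtain rfl := Option.some_inj.mp hb'
                rw [List.getLast?_concat] at ha'
                obtain rfl := Option.some_inj.mp ha'
                exact hca)
              hT₁X
          refine ⟨A, B, h1, h2, h3, h4, ?_⟩
          simp only [List.length_append, List.length_cons, List.length_nil] at h5 ⊢
          omega

end LCSAux

namespace LCSAux

lemma chain_shift_down {k : ℕ} :
    ∀ {B : List (ℕ × ℕ)}, B.Chain' lt2 → (∀ a ∈ B, k ≤ a.2) →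
      (B.map (fun pq => (pq.1, pq.2 - k))).Chain' lt2
  | [], _, _ => by simp [List.Chain']
  | [a], _, _ => by simp [List.Chain']
  | a :: b :: B, hc, hm => by
    rw [List.map_cons, List.map_cons, List.chain'_cons]
    rw [List.chain'_cons] at hc
    refine ⟨⟨hc.1.1, ?_⟩, ?_⟩
    · have hka : k ≤ a.2 := (hm a List.mem_cons_self)
      have hab := hc.1.2
      simp only
      omega
    · have := chain_shift_down (k := k) hc.2 (fun y hy => hm y (List.mem_cons_of_mem _ hy))
      rw [List.map_cons] at this
      exact this

variable {α : Type*}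

lemma core (R U : List α) (k x : ℕ)
    (hper : ∀ (i : ℕ) (h : i + k < U.length), U[i + k]'h = U[i]'(by omega))
    (hk : 0 < k) (hkx : k ≤ x) (hx : x < U.length) :
    LCS R (U.take (x + 1)) + LCS R (U.take (x - k)) ≤
      LCS R (U.take x) + LCS R (U.take (x + 1 - k)) := by
  obtain ⟨LT, hLTlen, hLTc, hLTP, hLTcol⟩ := lcs_take_mat R U (x + 1)
  obtain ⟨LS, hLSlen, hLSc, hLSP, hLScol⟩ := lcs_take_mat R U (x - k)
  set LS' : List (ℕ × ℕ) := LS.map (fun pq => (pq.1, pq.2 + k)) with hLS'def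
  have hLS'c : LS'.Chain' lt2 :=
    (List.chain'_map _).mpr (hLSc.imp fun a b h => ⟨h.1, by exact Nat.add_lt_add_right h.2 k⟩)
  have hLS'P : ∀ pq ∈ LS',
      (∃ (hp : pq.1 < R.length) (hq : pq.2 < U.length), R[pq.1] = U[pq.2]) ∧
        k ≤ pq.2 ∧ pq.2 < x := by
    intro pq hpq
    rw [hLS'def, List.mem_map] at hpq
    obtain ⟨r, hr, rfl⟩ := hpq
    obtain ⟨hp, hq, heq⟩ := hLSP r hr
    have hcol := hLScol r hr
    have hq2 : r.2 + k < U.length := by omega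
    refine ⟨⟨hp, hq2, ?_⟩, by omega, by omega⟩
    rw [hper r.2 hq2]
    exact heq
  rcases List.eq_nil_or_concat' LT with rfl | ⟨LT', e, rfl⟩
  · have h0 : LCS R (U.take (x + 1)) = 0 := by simpa using hLTlen.symm
    have hmono := lcs_take_mono R U (show x - k ≤ x + 1 - k by omega)
    omega
  · have hpw := List.chain'_iff_pairwise.mp hLTc
    have hLT'lt : ∀ a ∈ LT', lt2 a e := by
      have := List.pairwise_append.mp hpw
      intro a ha
      exact this.2.2 a ha e (List.mem_singleton_self e)
    have heX : e.2 ≤ x := by have := hLTcol e (by simp); omega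
    by_cases hex : e.2 = x
    · -- main case: crossing
      set p : ℕ × ℕ → Bool := fun pq => decide (pq.1 < e.1) with hpdef
      set S₁ := LS'.takeWhile p with hS₁def
      set S₂ := LS'.dropWhile p with hS₂def
      have hsplit : S₁ ++ S₂ = LS' := List.takeWhile_append_dropWhile (p := p) (l := LS')
      obtain ⟨A, B, hAc, hBc, hAm, hBm, hABlen⟩ :=
        crossing (fun pq => ∃ (hp : pq.1 < R.length) (hq : pq.2 < U.length), R[pq.1] = U[pq.2])
          k x (LT'.length + S₁.length) LT' S₁ [e] S₂ le_rfl
          hLTc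
          (by rw [hsplit]; exact hLS'c)
          (by
            intro a ha
            refine ⟨(hLTP a ha).imp ?_, by have := hLTcol a ha; omega⟩
            intro hp h
            exact h
            )
          (by
            intro a ha
            rw [hsplit] at ha
            obtain ⟨hP, h1, h2⟩ := hLS'P a ha
            exact ⟨hP, h1, h2⟩)
          (by
            rw [List.chain'_append]
            refine ⟨(hLS'c.sublist (hS₁def ▸ List.takeWhile_sublist p)), List.isChain_singleton e, ?_⟩
            intro cc hcc y hy
            simp only [List.head?_cons, Option.mem_def, Option.some_inj] at hy
            subst hy
            have hccmem : cc ∈ S₁ := List.mem_of_mem_getLast? hcc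
            have hcc1 : cc.1 < e.1 := by
              have := List.mem_takeWhile_imp (hS₁def ▸ hccmem)
              simpa [hpdef] using this
            have hcc2 : cc.2 < x := (hLS'P cc (by rw [← hsplit]; exact List.mem_append_left _ hccmem)).2.2
            exact ⟨hcc1, by omega⟩)
          (by
            intro a ha
            simp only [List.mem_singleton] at ha
            subst ha
            omega)
          (by
            intro a' ha' b' hb'
            have ha'1 : a'.1 < e.1 := (hLT'lt a' (List.mem_of_mem_getLast? ha')).1
            have hd := List.head?_dropWhile_not p LS'
            rw [← hS₂def] at hd
            simp only [Option.mem_def] at hb'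
            rw [hb'] at hd
            have : ¬ b'.1 < e.1 := by simpa [hpdef] using hd
            omega)
          (by
            intro a ha
            have := (hLT'lt a ha).2
            omega)
      -- A bounds LCS R (take x)
      have hA : A.length ≤ LCS R (U.take x) :=
        mat_le_lcs_take R U A x hAc (fun pq hpq => (hAm pq hpq).1) (fun pq hpq => (hAm pq hpq).2)
      -- B shifted down bounds LCS R (take (x+1-k))
      set B' : List (ℕ × ℕ) := B.map (fun pq => (pq.1, pq.2 - k)) with hB'def
      have hB'c : B'.Chain' lt2 :=
        chain_shift_down hBc (fun a ha => (hBm a ha).2.1)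
      have hB : B'.length ≤ LCS R (U.take (x + 1 - k)) := by
        apply mat_le_lcs_take R U B' (x + 1 - k) hB'c
        · intro pq hpq
          rw [hB'def, List.mem_map] at hpq
          obtain ⟨r, hr, rfl⟩ := hpq
          obtain ⟨⟨hp, hq, heq⟩, hk2, hX2⟩ := hBm r hr
          have hq2 : r.2 - k < U.length := by omega
          refine ⟨hp, hq2, ?_⟩
          have e1 : r.2 - k + k = r.2 := by omega
          have h2 := hper (r.2 - k) (by omega)
          simp only [e1] at h2
          rw [← h2]
          exact heq
        · intro pq hpq
          rw [hB'def, List.mem_map] at hpq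
          obtain ⟨r, hr, rfl⟩ := hpq
          have := (hBm r hr).2
          simp only
          omega
      -- put together
      have hlenS : S₁.length + S₂.length = LS.length := by
        have := congrArg List.length hsplit
        simpa [hLS'def] using this
      have hB'len : B'.length = B.length := by simp [hB'def]
      have hLTlen' : LT'.length + 1 = LCS R (U.take (x + 1)) := by
        simpa using hLTlen
      simp only [List.length_append, List.length_cons, List.length_nil] at hABlen
      omega
    · -- all columns < x : easy case
      have hcol' : ∀ pq ∈ LT' ++ [e], pq.2 < x := by
        intro pq hpq
        rcases List.mem_append.mp hpq with h | h
        · have := (hLT'lt pq h).2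
          omega
        · simp only [List.mem_singleton] at h
          subst h
          omega
      have h1 := mat_le_lcs_take R U (LT' ++ [e]) x hLTc hLTP hcol'
      have h2 := lcs_take_mono R U (show x - k ≤ x + 1 - k by omega)
      omega

end LCSAux

/-- If `U` is `k`-periodic, then `δ_k h_R` is monotone non-increasing. -/
theorem stmt0 {α : Type*} [Fintype α] (k : ℕ) (hk : 0 < k) (U R : List α)
    (hper : ∀ (i : ℕ) (h : i + k < U.length), U.get ⟨i + k, h⟩ = U.get ⟨i, by omega⟩)
    (h : ℤ → ℤ)
    (hdef : ∀ x : ℤ, (0 ≤ x → h x = (LCS R (U.take x.toNat) : ℤ)) ∧ (x ≤ 0 → h x = x)) :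
    Antitone (fun x : ℤ => h x - h (x - k)) := by
  have hper' : ∀ (i : ℕ) (hh : i + k < U.length), U[i + k]'hh = U[i]'(by omega) := by
    intro i hh
    simpa [List.get_eq_getElem] using hper i hh
  apply antitone_int_of_succ_le
  intro n
  show h (n + 1) - h (n + 1 - (k : ℤ)) ≤ h n - h (n - (k : ℤ))
  rcases le_or_gt (n + 1) 0 with hn | hn
  · rw [(hdef (n + 1)).2 hn, (hdef n).2 (by omega), (hdef (n + 1 - k)).2 (by omega),
      (hdef (n - k)).2 (by omega)]
    omega
  · have hn0 : 0 ≤ n := by omega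
    have e1 : (n + 1).toNat = n.toNat + 1 := by omega
    have h1 : h (n + 1) = (LCS R (U.take (n.toNat + 1)) : ℤ) := by
      rw [(hdef (n + 1)).1 (by omega), e1]
    have h2 : h n = (LCS R (U.take n.toNat) : ℤ) := (hdef n).1 hn0
    rcases le_or_gt (n + 1 - k) 0 with hnk | hnk
    · rw [h1, h2, (hdef (n + 1 - k)).2 hnk, (hdef (n - k)).2 (by omega)]
      have := LCSAux.lcs_take_succ R U n.toNat
      omega
    · set m := n.toNat with hm
      have hmk : k ≤ m := by omega
      have e2 : (n - k).toNat = m - k := by omega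
      have e3 : (n + 1 - k).toNat = m + 1 - k := by omega
      have h3 : h (n - k) = (LCS R (U.take (m - k)) : ℤ) := by
        rw [(hdef (n - k)).1 (by omega), e2]
      have h4 : h (n + 1 - k) = (LCS R (U.take (m + 1 - k)) : ℤ) := by
        rw [(hdef (n + 1 - k)).1 (by omega), e3]
      rw [h1, h2, h3, h4]
      rcases lt_or_ge m U.length with hmU | hmU
      · have := LCSAux.core R U k m hper' hk hmk hmU
        omega
      · have e4 : U.take (m + 1) = U.take m := by
          rw [List.take_of_length_le hmU, List.take_of_length_le (by omega)]
        have := LCSAux.lcs_take_mono R U (show m - k ≤ m + 1 - k by omega)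
        rw [e4]
        omega
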